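/- Let G be a group with a subgroup H of index 2. In the representation ring R(G), for any virtual representations E and F of G with Res_H E = Res_H F, the element E − F lies in the ideal R(G)·(ℂ₊ − ℂ₋) generated by ℂ₊ − ℂ₋, where ℂ₊ and ℂ₋ are the trivial and sign representations of G/H inflated to G. -/

import Mathlib

noncomputable section

def subRep {G V : Type} [Group G] [AddCommGroup V] [Module ℂ V]
    (ρ : Representation ℂ G V) (p : Submodule ℂ V)
    (hp : ∀ g : G, ∀ x ∈ p, ρ g x ∈ p) : Representation ℂ G p where
  toFun g := (ρ g).restrict (hp g)
  map_one' := by ext x; simp [LinearMap.restrict_apply]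
  map_mul' g g' := by ext x; simp [LinearMap.restrict_apply]

def conjRep {G V W : Type} [Group G] [AddCommGroup V] [Module ℂ V]
    [AddCommGroup W] [Module ℂ W]
    (ρ : Representation ℂ G V) (b : V ≃ₗ[ℂ] W) : Representation ℂ G W where
  toFun g := b.toLinearMap ∘ₗ ρ g ∘ₗ b.symm.toLinearMap
  map_one' := by ext x; simp
  map_mul' g g' := by ext x; simp



/-- The direct sum of two representations on the product space. -/
def prodRep {G : Type} [Group G] {V W : Type} [AddCommGroup V] [Module ℂ V]
    [AddCommGroup W] [Module ℂ W]
    (ρ : Representation ℂ G V) (τ : Representation ℂ G W) :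
    Representation ℂ G (V × W) where
  toFun g := (ρ g).prodMap (τ g)
  map_one' := by ext v <;> simp
  map_mul' g g' := by ext v <;> simp

/-- The twist of a representation by a one-dimensional character `u : G →* ℂˣ`
(i.e. the tensor product `W ⊗ U`). -/
def twist {G : Type} [Group G] {V : Type} [AddCommGroup V] [Module ℂ V]
    (u : G →* ℂˣ) (ρ : Representation ℂ G V) : Representation ℂ G V where
  toFun g := (u g : ℂ) • ρ g
  map_one' := by simp
  map_mul' g g' := by
    ext v
    simp only [map_mul, Units.val_mul, LinearMap.smul_apply, Module.End.mul_apply,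
      map_smul, smul_smul]
    ring_nf

set_option maxHeartbeats 2000000 in
/-- Let `G` be a finite group with a subgroup `H` of index 2, and let `ℂ₊`, `ℂ₋` be the
trivial and sign representations of `G/H` inflated to `G` (`ℂ₋` given by the
homomorphism `u : G →* ℂˣ` taking value `1` on `H` and `-1` off `H`).  For any virtual
representations `E − F` with `Res_H E = Res_H F` (formulated with honest representations
`E`, `F` whose restrictions to `H` are isomorphic), the element `E − F` of the
representation ring `R(G)` lies in the ideal generated by `ℂ₊ − ℂ₋`; that is, there are
representations `A`, `B` with `E ⊕ (A ⊗ ℂ₋) ⊕ B ≅ F ⊕ A ⊕ (B ⊗ ℂ₋)`. -/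
theorem kernel_res_in_ideal {G : Type} [Group G] [Finite G]
    (H : Subgroup G) (hidx : H.index = 2)
    (u : G →* ℂˣ) (hu : ∀ g : G, ((u g : ℂ) = 1 ↔ g ∈ H) ∧ ((u g : ℂ) = 1 ∨ (u g : ℂ) = -1))
    {VE VF : Type} [AddCommGroup VE] [Module ℂ VE] [FiniteDimensional ℂ VE]
    [AddCommGroup VF] [Module ℂ VF] [FiniteDimensional ℂ VF]
    (ρE : Representation ℂ G VE) (ρF : Representation ℂ G VF)
    (hres : ∃ e : VE ≃ₗ[ℂ] VF, ∀ (h : H) (v : VE), e (ρE (h : G) v) = ρF (h : G) (e v)) :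
    ∃ (nA nB : ℕ) (ρA : Representation ℂ G (Fin nA → ℂ))
      (ρB : Representation ℂ G (Fin nB → ℂ))
      (e : (VE × ((Fin nA → ℂ) × (Fin nB → ℂ))) ≃ₗ[ℂ]
        (VF × ((Fin nA → ℂ) × (Fin nB → ℂ)))),
      ∀ (g : G) (v : VE × ((Fin nA → ℂ) × (Fin nB → ℂ))),
        e (prodRep ρE (prodRep (twist u ρA) ρB) g v) =
          prodRep ρF (prodRep ρA (twist u ρB)) g (e v) := by
  classical
  obtain ⟨φ, hφ⟩ := hres
  -- basic facts about H and u
  have hum : ∀ g ∉ H, (u g : ℂ) = -1 := fun g hg =>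
    ((hu g).2).resolve_left fun h1 => hg ((hu g).1.mp h1)
  have hu1 : ∀ g ∈ H, (u g : ℂ) = 1 := fun g hg => (hu g).1.mpr hg
  have husq : ∀ g : G, (u g : ℂ) * (u g : ℂ) = 1 := by
    intro g
    rcases (hu g).2 with h | h <;> rw [h] <;> ring
  have hmul : ∀ {a b : G}, a * b ∈ H ↔ (a ∈ H ↔ b ∈ H) :=
    fun {a b} => Subgroup.mul_mem_iff_of_index_two hidx
  have hnn : ∀ {a b : G}, a ∉ H → b ∉ H → a * b ∈ H := by
    intro a b ha hb; exact hmul.mpr (iff_of_false ha hb)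
  have hinvn : ∀ {a : G}, a ∉ H → a⁻¹ ∉ H := by
    intro a ha h; exact ha (H.inv_mem_iff.mp h)
  obtain ⟨s, hs⟩ : ∃ s, s ∉ H := by
    by_contra h
    push_neg at h
    have : H = ⊤ := Subgroup.eq_top_iff' H |>.mpr h
    rw [this, Subgroup.index_top] at hidx
    norm_num at hidx
  -- applying representations composes
  have hEE : ∀ (a b : G) (v : VE), ρE a (ρE b v) = ρE (a * b) v := by
    intro a b v; rw [map_mul]; rfl
  have hFF : ∀ (a b : G) (w : VF), ρF a (ρF b w) = ρF (a * b) w := by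
    intro a b v; rw [map_mul]; rfl
  -- intertwining of φ over H
  have hφH : ∀ g ∈ H, ∀ v, φ (ρE g v) = ρF g (φ v) := fun g hg v => hφ ⟨g, hg⟩ v
  have hφsH : ∀ g ∈ H, ∀ w, φ.symm (ρF g w) = ρE g (φ.symm w) := by
    intro g hg w
    apply φ.injective
    rw [hφH g hg, φ.apply_symm_apply, φ.apply_symm_apply]
  -- the twisted intertwiner ψ and the operator J with inverse Ji
  set ψ : VE → VF := fun v => ρF s (φ (ρE s⁻¹ v)) with hψdef
  set J : VE → VE := fun v => φ.symm (ψ v) with hJdef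
  set Ji : VE → VE := fun v => ρE s (φ.symm (ρF s⁻¹ (φ v))) with hJidef
  have hψφ : ∀ v, ψ v = φ (J v) := by
    intro v; rw [hJdef]; simp
  have hψH : ∀ g ∈ H, ∀ v, ψ (ρE g v) = ρF g (ψ v) := by
    intro g hg v
    have hk : s⁻¹ * g * s ∈ H := hnn (fun h => (hinvn hs) (hmul.mp h |>.mpr hg) ) hs
    -- s⁻¹ * g = (s⁻¹ * g * s) * s⁻¹
    simp only [hψdef]
    rw [hEE s⁻¹ g v, show s⁻¹ * g = (s⁻¹ * g * s) * s⁻¹ by group, ← hEE (s⁻¹*g*s) s⁻¹ v,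
      hφH _ hk, hFF, hFF, show s * (s⁻¹ * g * s) = g * s by group]
  have hψG : ∀ g ∉ H, ∀ v, ψ (ρE g v) = ρF g (φ v) := by
    intro g hg v
    have hk : s⁻¹ * g ∈ H := hnn (hinvn hs) hg
    simp only [hψdef]
    rw [hEE s⁻¹ g v, hφH _ hk, hFF, show s * (s⁻¹ * g) = g by group]
  have hφG : ∀ g ∉ H, ∀ v, φ (ρE g v) = ρF g (ψ v) := by
    intro g hg v
    have h1 : g * s⁻¹ ∈ H := hnn hg (hinvn hs)
    have h2 : s * s ∈ H := hnn hs hs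
    simp only [hψdef]
    rw [show (g:G) = (g * s⁻¹) * s by group, ← hEE (g*s⁻¹) s v, hφH _ h1,
      show ρE s v = ρE (s*s) (ρE s⁻¹ v) by rw [hEE]; congr 1; group,
      hφH _ h2, hFF, hFF]
    congr 1
    group
  -- J relations
  have hJJi : ∀ v, J (Ji v) = v := by
    intro v
    simp only [hJdef, hJidef, hψdef]
    rw [hEE, show s⁻¹ * s = 1 by group, map_one, Module.End.one_apply,
      φ.apply_symm_apply, hFF, show s * s⁻¹ = 1 by group, map_one, Module.End.one_apply,
      φ.symm_apply_apply]
  have hJiJ : ∀ v, Ji (J v) = v := by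
    intro v
    simp only [hJdef, hJidef, hψdef]
    rw [φ.apply_symm_apply, hFF, show s⁻¹ * s = 1 by group, map_one, Module.End.one_apply,
      φ.symm_apply_apply, hEE, show s * s⁻¹ = 1 by group, map_one, Module.End.one_apply]
  have hJH : ∀ g ∈ H, ∀ v, J (ρE g v) = ρE g (J v) := by
    intro g hg v
    simp only [hJdef]
    rw [hψH g hg, hφsH g hg]
  have hJG : ∀ g ∉ H, ∀ v, J (ρE g v) = ρE g (Ji v) := by
    intro g hg v
    have h1 : g * s ∈ H := hnn hg hs
    simp only [hJdef, hJidef]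
    rw [hψG g hg, hEE, ← hφsH _ h1, hFF, show g * s * s⁻¹ = g by group]
  have hJiG : ∀ g ∉ H, ∀ v, Ji (ρE g v) = ρE g (J v) := by
    intro g hg v
    have h1 : s⁻¹ * g ∈ H := hnn (hinvn hs) hg
    simp only [hJdef, hJidef]
    rw [hφG g hg, hFF, hφsH _ h1, hEE, show s * (s⁻¹ * g) = g by group]
  -- linear map versions
  set Jl : VE →ₗ[ℂ] VE :=
    (φ.symm.toLinearMap ∘ₗ (ρF s) ∘ₗ φ.toLinearMap ∘ₗ (ρE s⁻¹)) with hJldef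
  have hJl : ∀ v, Jl v = J v := fun v => rfl
  set Jil : VE →ₗ[ℂ] VE :=
    ((ρE s) ∘ₗ φ.symm.toLinearMap ∘ₗ (ρF s⁻¹) ∘ₗ φ.toLinearMap) with hJildef
  have hJil : ∀ v, Jil v = Ji v := fun v => rfl
  set N : Module.End ℂ VE := 1 + Jl with hNdef
  set M1 : Module.End ℂ VE := 1 - Jl with hM1def
  have hN : ∀ v, N v = v + J v := fun v => rfl
  have hM1 : ∀ v, M1 v = v - J v := fun v => rfl
  -- pointwise commutation facts
  have hJaddE : ∀ v w, J (v + w) = J v + J w := by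
    intro v w; rw [← hJl, ← hJl, ← hJl, map_add]
  have hJiaddE : ∀ v w, Ji (v + w) = Ji v + Ji w := by
    intro v w; rw [← hJil, ← hJil, ← hJil, map_add]
  have hpowN : ∀ (k : ℕ) (v : VE), (N ^ (k+1)) v = (N ^ k) (N v) := by
    intro k v; rw [pow_succ]; rfl
  have hpowJil : ∀ (k : ℕ) (v : VE), (Jil ^ (k+1)) v = (Jil ^ k) (Jil v) := by
    intro k v; rw [pow_succ]; rfl
  have hNkJ : ∀ (k : ℕ) (v : VE), Jl ((N ^ k) v) = (N ^ k) (Jl v) := by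
    intro k
    induction k with
    | zero => intro v; simp
    | succ k ih =>
      intro v
      rw [hpowN, hpowN, ih (N v)]
      congr 1
      simp only [hJl, hN, hJaddE]
  have hNkJi : ∀ (k : ℕ) (v : VE), Jil ((N ^ k) v) = (N ^ k) (Jil v) := by
    intro k
    induction k with
    | zero => intro v; simp
    | succ k ih =>
      intro v
      rw [hpowN, hpowN, ih (N v)]
      congr 1
      simp only [hJil, hN, hJiaddE]
      rw [hJiJ, hJJi]
  have hJilNk : ∀ (j k : ℕ) (v : VE), (Jil ^ j) ((N ^ k) v) = (N ^ k) ((Jil ^ j) v) := by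
    intro j k
    induction j with
    | zero => intro v; simp
    | succ j ih =>
      intro v
      rw [hpowJil, hpowJil, ← ih (Jil v), hNkJi]
  have hNkH : ∀ g ∈ H, ∀ (k : ℕ) (v : VE), (N ^ k) (ρE g v) = ρE g ((N ^ k) v) := by
    intro g hg k
    induction k with
    | zero => intro v; simp
    | succ k ih =>
      intro v
      rw [hpowN, hpowN, ← ih (N v)]
      congr 1
      rw [hN, hN, map_add, hJH g hg]
      try rw [add_comm]
  have hNG : ∀ g ∉ H, ∀ v, N (ρE g v) = ρE g (Jil (N v)) := by
    intro g hg v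
    have h1 : Jil (N v) = Ji v + v := by rw [hJil, hN, hJiaddE, hJiJ]
    rw [hN, hJG g hg, h1, map_add, add_comm]
  have hNG' : ∀ g ∉ H, ∀ v, ρE g (N v) = Jil (N (ρE g v)) := by
    intro g hg v
    have h1 : Jil (N (ρE g v)) = Ji (ρE g v) + ρE g v := by rw [hJil, hN, hJiaddE, hJiJ]
    rw [hN, map_add, h1, hJiG g hg, add_comm]
  have hNkG : ∀ g ∉ H, ∀ (k : ℕ) (v : VE),
      (N ^ k) (ρE g v) = ρE g ((Jil ^ k) ((N ^ k) v)) := by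
    intro g hg k
    induction k with
    | zero => intro v; simp
    | succ k ih =>
      intro v
      rw [hpowN, hNG g hg, ih, ← hNkJi, ← hpowJil, ← hpowN]
  have hNkG' : ∀ g ∉ H, ∀ (k : ℕ) (v : VE),
      ρE g ((N ^ k) v) = (Jil ^ k) ((N ^ k) (ρE g v)) := by
    intro g hg k
    induction k with
    | zero => intro v; simp
    | succ k ih =>
      intro v
      rw [hpowN, ih, hNG' g hg, ← hNkJi, ← hpowJil, ← hpowN]
  -- Fitting decomposition
  obtain ⟨n0, hn0⟩ := Filter.eventually_atTop.mp (LinearMap.eventually_isCompl_ker_pow_range_pow N)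
  set n : ℕ := n0 + 1 with hndef
  have hcompl : IsCompl (LinearMap.ker (N ^ n)) (LinearMap.range (N ^ n)) :=
    hn0 n (Nat.le_succ n0)
  set Vm : Submodule ℂ VE := LinearMap.ker (N ^ n) with hVmdef
  set Vz : Submodule ℂ VE := LinearMap.range (N ^ n) with hVzdef
  have hstabm : ∀ g : G, ∀ x ∈ Vm, ρE g x ∈ Vm := by
    intro g x hx
    rw [hVmdef, LinearMap.mem_ker] at hx ⊢
    by_cases hg : g ∈ H
    · rw [hNkH g hg, hx, map_zero]
    · rw [hNkG g hg, hx, map_zero, map_zero]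
  have hstabz : ∀ g : G, ∀ x ∈ Vz, ρE g x ∈ Vz := by
    intro g x hx
    rw [hVzdef, LinearMap.mem_range] at hx ⊢
    obtain ⟨y, hy⟩ := hx
    by_cases hg : g ∈ H
    · exact ⟨ρE g y, by rw [hNkH g hg, hy]⟩
    · exact ⟨(Jil ^ n) (ρE g y), by rw [← hJilNk, ← hNkG' g hg, hy]⟩
  -- rewriting lemmas with Jl instead of J
  have hNl : ∀ v, N v = v + Jl v := fun v => rfl
  have hM1l : ∀ v, M1 v = v - Jl v := fun v => rfl
  -- more pointwise intertwining
  have hNHpt : ∀ g ∈ H, ∀ v, N (ρE g v) = ρE g (N v) := by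
    intro g hg v
    rw [hNl, hNl, map_add, hJl, hJl, hJH g hg]
  have hM1Hpt : ∀ g ∈ H, ∀ v, M1 (ρE g v) = ρE g (M1 v) := by
    intro g hg v
    rw [hM1l, hM1l, map_sub, hJl, hJl, hJH g hg]
  have hM1G : ∀ g ∉ H, ∀ v, M1 (ρE g v) = - (ρE g (Jil (M1 v))) := by
    intro g hg v
    have h1 : Jil (M1 v) = Ji v - v := by
      rw [hM1l]
      have : Jil (v - Jl v) = Jil v - Jil (Jl v) := map_sub _ _ _
      rw [this, hJil, hJil, hJl, hJiJ]
    have h2 : ρE g (Ji v - v) = ρE g (Ji v) - ρE g v := map_sub _ _ _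
    rw [h1, h2, neg_sub, hM1l, hJl, hJG g hg]
  have hψJi : ∀ w, ψ (Ji w) = φ w := by
    intro w; rw [hψφ, hJJi]
  -- invariance of the Fitting pieces under N, M1
  have hNcommn : ∀ v, N ((N ^ n) v) = (N ^ n) (N v) := by
    intro v
    have h1 : (N ^ (n+1)) v = N ((N ^ n) v) := by rw [pow_succ']; rfl
    rw [← h1, hpowN]
  have hNVz : ∀ x ∈ Vz, N x ∈ Vz := by
    intro x hx
    rw [hVzdef, LinearMap.mem_range] at hx ⊢
    obtain ⟨y, hy⟩ := hx
    exact ⟨N y, by rw [← hNcommn, hy]⟩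
  have hM1Vm : ∀ x ∈ Vm, M1 x ∈ Vm := by
    intro x hx
    rw [hVmdef, LinearMap.mem_ker] at hx ⊢
    have h1 : (N ^ n) (M1 x) = (N ^ n) x - Jl ((N ^ n) x) := by
      rw [hM1l, map_sub, hNkJ]
    rw [h1, hx, map_zero, sub_zero]
  -- projections
  set Pm : VE →ₗ[ℂ] Vm := Vm.linearProjOfIsCompl Vz hcompl with hPmdef
  set Pz : VE →ₗ[ℂ] Vz := Vz.linearProjOfIsCompl Vm hcompl.symm with hPzdef
  have hdecomp : ∀ v : VE, ((Pm v : VE) + (Pz v : VE)) = v := fun v =>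
    Submodule.projection_add_projection_eq_self hcompl v
  have hPmcoe : ∀ m : Vm, Pm (m : VE) = m := fun m =>
    Submodule.linearProjOfIsCompl_apply_left hcompl m
  have hPzcoe : ∀ z : Vz, Pz (z : VE) = z := fun z =>
    Submodule.linearProjOfIsCompl_apply_left hcompl.symm z
  have hPmz : ∀ x ∈ Vz, Pm x = 0 := fun x hx =>
    Submodule.projectionOnto_apply_of_mem_right hcompl hx
  have hPzm : ∀ x ∈ Vm, Pz x = 0 := fun x hx =>
    Submodule.projectionOnto_apply_of_mem_right hcompl.symm hx
  have hPmcomm : ∀ (g : G) (v : VE), (Pm (ρE g v) : VE) = ρE g ((Pm v : VE)) := by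
    intro g v
    have h1 : ρE g v = ρE g ((Pm v : VE)) + ρE g ((Pz v : VE)) := by
      rw [← map_add, hdecomp]
    have h2 : Pm (ρE g ((Pm v : VE))) = ⟨ρE g ((Pm v : VE)), hstabm g _ (Pm v).2⟩ :=
      hPmcoe ⟨ρE g ((Pm v : VE)), hstabm g _ (Pm v).2⟩
    rw [h1, map_add, h2, hPmz _ (hstabz g _ (Pz v).2), add_zero]
  have hPzcomm : ∀ (g : G) (v : VE), (Pz (ρE g v) : VE) = ρE g ((Pz v : VE)) := by
    intro g v
    have h1 : ρE g v = ρE g ((Pm v : VE)) + ρE g ((Pz v : VE)) := by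
      rw [← map_add, hdecomp]
    have h2 : Pz (ρE g ((Pz v : VE))) = ⟨ρE g ((Pz v : VE)), hstabz g _ (Pz v).2⟩ :=
      hPzcoe ⟨ρE g ((Pz v : VE)), hstabz g _ (Pz v).2⟩
    rw [h1, map_add, h2, hPzm _ (hstabm g _ (Pm v).2), zero_add]
  -- restricted equivalences
  set cz : Vz →ₗ[ℂ] Vz := N.restrict hNVz with hczdef
  have hczcoe : ∀ z : Vz, (cz z : VE) = N (z : VE) := fun z => rfl
  have hczinj : Function.Injective cz := by
    rw [← LinearMap.ker_eq_bot, Submodule.eq_bot_iff]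
    rintro z hz
    rw [LinearMap.mem_ker] at hz
    have h1 : N (z : VE) = 0 := by rw [← hczcoe, hz]; rfl
    have h2 : (z : VE) ∈ Vm := by
      rw [hVmdef, LinearMap.mem_ker, hndef, hpowN, h1, map_zero]
    have h3 : (z : VE) = 0 := Submodule.disjoint_def.mp hcompl.disjoint _ h2 z.2
    exact Subtype.ext h3
  set cze : Vz ≃ₗ[ℂ] Vz :=
    LinearEquiv.ofBijective cz ⟨hczinj, LinearMap.injective_iff_surjective.mp hczinj⟩
    with hczedef
  have hczecoe : ∀ z : Vz, (cze z : VE) = N (z : VE) := fun z => rfl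
  have hczesymm : ∀ z : Vz, N ((cze.symm z : Vz) : VE) = (z : VE) := by
    intro z
    have h1 : cze (cze.symm z) = z := cze.apply_symm_apply z
    calc N ((cze.symm z : Vz) : VE) = ((cze (cze.symm z) : Vz) : VE) := rfl
      _ = (z : VE) := by rw [h1]
  set cm : Vm →ₗ[ℂ] Vm := M1.restrict hM1Vm with hcmdef
  have hcmcoe : ∀ m : Vm, (cm m : VE) = M1 (m : VE) := fun m => rfl
  have hcminj : Function.Injective cm := by
    rw [← LinearMap.ker_eq_bot, Submodule.eq_bot_iff]
    rintro m hm
    rw [LinearMap.mem_ker] at hm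
    have h1 : M1 (m : VE) = 0 := by rw [← hcmcoe, hm]; rfl
    have h2 : Jl (m : VE) = (m : VE) := by
      have h := hM1l (m : VE)
      rw [h1] at h
      exact (sub_eq_zero.mp h.symm).symm
    have h3 : ∀ k : ℕ, (N ^ k) (m : VE) = ((2 : ℂ) ^ k) • (m : VE) := by
      intro k
      induction k with
      | zero => simp
      | succ k ih =>
        rw [hpowN, hNl, h2, ← two_smul ℂ (m : VE), map_smul, ih, smul_smul,
          pow_succ, mul_comm]
    have hm0 : (N ^ n) (m : VE) = 0 := m.2
    have h4 : (0 : VE) = ((2 : ℂ) ^ n) • (m : VE) := by rw [← h3 n, hm0]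
    have h5 : (m : VE) = 0 := by
      rcases smul_eq_zero.mp h4.symm with h | h
      · exact absurd h (pow_ne_zero _ two_ne_zero)
      · exact h
    exact Subtype.ext h5
  set cme : Vm ≃ₗ[ℂ] Vm :=
    LinearEquiv.ofBijective cm ⟨hcminj, LinearMap.injective_iff_surjective.mp hcminj⟩
    with hcmedef
  have hcmecoe : ∀ m : Vm, (cme m : VE) = M1 (m : VE) := fun m => rfl
  have hcmesymm : ∀ m : Vm, M1 ((cme.symm m : Vm) : VE) = (m : VE) := by
    intro m
    have h1 : cme (cme.symm m) = m := cme.apply_symm_apply m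
    calc M1 ((cme.symm m : Vm) : VE) = ((cme (cme.symm m) : Vm) : VE) := rfl
      _ = (m : VE) := by rw [h1]
  -- the representation B
  set nB : ℕ := Module.finrank ℂ Vm with hnBdef
  set bB : Vm ≃ₗ[ℂ] (Fin nB → ℂ) := (Module.finBasis ℂ Vm).equivFun with hbBdef
  set ρm : Representation ℂ G Vm := subRep ρE Vm hstabm with hρmdef
  have hρm : ∀ (g : G) (m : Vm), (ρm g m : VE) = ρE g (m : VE) := fun g m => rfl
  set ρBc : Representation ℂ G (Fin nB → ℂ) := conjRep ρm bB with hρBcdef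
  have hρBc : ∀ (g : G) (x : Fin nB → ℂ), ρBc g x = bB (ρm g (bB.symm x)) :=
    fun g x => rfl
  -- the two linear maps
  set FstE : (VE × ((Fin 0 → ℂ) × (Fin nB → ℂ))) →ₗ[ℂ] VE :=
    LinearMap.fst ℂ VE ((Fin 0 → ℂ) × (Fin nB → ℂ)) with hFstEdef
  set SndE : (VE × ((Fin 0 → ℂ) × (Fin nB → ℂ))) →ₗ[ℂ] (Fin nB → ℂ) :=
    (LinearMap.snd ℂ (Fin 0 → ℂ) (Fin nB → ℂ)) ∘ₗ
      (LinearMap.snd ℂ VE ((Fin 0 → ℂ) × (Fin nB → ℂ))) with hSndEdef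
  set FstF : (VF × ((Fin 0 → ℂ) × (Fin nB → ℂ))) →ₗ[ℂ] VF :=
    LinearMap.fst ℂ VF ((Fin 0 → ℂ) × (Fin nB → ℂ)) with hFstFdef
  set SndF : (VF × ((Fin 0 → ℂ) × (Fin nB → ℂ))) →ₗ[ℂ] (Fin nB → ℂ) :=
    (LinearMap.snd ℂ (Fin 0 → ℂ) (Fin nB → ℂ)) ∘ₗ
      (LinearMap.snd ℂ VF ((Fin 0 → ℂ) × (Fin nB → ℂ))) with hSndFdef
  set fmap : (VE × ((Fin 0 → ℂ) × (Fin nB → ℂ))) →ₗ[ℂ]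
      (VF × ((Fin 0 → ℂ) × (Fin nB → ℂ))) :=
    (φ.toLinearMap ∘ₗ
        (N ∘ₗ Vz.subtype ∘ₗ Pz ∘ₗ FstE + M1 ∘ₗ Vm.subtype ∘ₗ bB.symm.toLinearMap ∘ₗ SndE)).prod
      ((0 : (VE × ((Fin 0 → ℂ) × (Fin nB → ℂ))) →ₗ[ℂ] (Fin 0 → ℂ)).prod
        (bB.toLinearMap ∘ₗ Pm ∘ₗ FstE)) with hfmapdef
  have hfmap : ∀ (v : VE) (a : Fin 0 → ℂ) (x : Fin nB → ℂ),
      fmap (v, (a, x)) = (φ (N ((Pz v : Vz) : VE) + M1 ((bB.symm x : Vm) : VE)),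
        ((0 : Fin 0 → ℂ), bB (Pm v))) := fun v a x => rfl
  set gmap : (VF × ((Fin 0 → ℂ) × (Fin nB → ℂ))) →ₗ[ℂ]
      (VE × ((Fin 0 → ℂ) × (Fin nB → ℂ))) :=
    (Vz.subtype ∘ₗ cze.symm.toLinearMap ∘ₗ Pz ∘ₗ φ.symm.toLinearMap ∘ₗ FstF
        + Vm.subtype ∘ₗ bB.symm.toLinearMap ∘ₗ SndF).prod
      ((0 : (VF × ((Fin 0 → ℂ) × (Fin nB → ℂ))) →ₗ[ℂ] (Fin 0 → ℂ)).prod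
        (bB.toLinearMap ∘ₗ cme.symm.toLinearMap ∘ₗ Pm ∘ₗ φ.symm.toLinearMap ∘ₗ FstF))
      with hgmapdef
  have hgmap : ∀ (w : VF) (a : Fin 0 → ℂ) (y : Fin nB → ℂ),
      gmap (w, (a, y)) = (((cze.symm (Pz (φ.symm w)) : Vz) : VE) + ((bB.symm y : Vm) : VE),
        ((0 : Fin 0 → ℂ), bB (cme.symm (Pm (φ.symm w))))) := fun w a y => rfl
  have hfg : fmap ∘ₗ gmap = LinearMap.id := by
    apply LinearMap.ext
    rintro ⟨w, a, y⟩
    have h0 : (fmap ∘ₗ gmap) (w, (a, y)) = fmap (gmap (w, (a, y))) := rfl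
    rw [h0, hgmap w a y, hfmap, LinearMap.id_apply]
    have e1 : Pz (((cze.symm (Pz (φ.symm w)) : Vz) : VE) + ((bB.symm y : Vm) : VE))
        = cze.symm (Pz (φ.symm w)) := by
      rw [map_add, hPzcoe, hPzm _ (bB.symm y).2, add_zero]
    have e2 : Pm (((cze.symm (Pz (φ.symm w)) : Vz) : VE) + ((bB.symm y : Vm) : VE))
        = bB.symm y := by
      rw [map_add, hPmcoe, hPmz _ (cze.symm (Pz (φ.symm w))).2, zero_add]
    refine Prod.ext ?_ (Prod.ext ?_ ?_)
    · show φ _ = w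
      rw [e1, LinearEquiv.symm_apply_apply, hczesymm, hcmesymm, add_comm, hdecomp,
        φ.apply_symm_apply]
    · exact Subsingleton.elim _ _
    · show bB _ = y
      rw [e2, LinearEquiv.apply_symm_apply]
  have hgf : gmap ∘ₗ fmap = LinearMap.id := by
    apply LinearMap.ext
    rintro ⟨v, a, x⟩
    have h0 : (gmap ∘ₗ fmap) (v, (a, x)) = gmap (fmap (v, (a, x))) := rfl
    rw [h0, hfmap v a x, hgmap, LinearMap.id_apply]
    have m1 : N ((Pz v : VE)) ∈ Vz := hNVz _ (Pz v).2
    have m2 : M1 ((bB.symm x : Vm) : VE) ∈ Vm := hM1Vm _ (bB.symm x).2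
    have e1 : Pz (φ.symm (φ (N ((Pz v : VE)) + M1 ((bB.symm x : Vm) : VE))))
        = cze (Pz v) := by
      rw [φ.symm_apply_apply, map_add]
      have e1a : Pz (N ((Pz v : VE))) = ⟨N ((Pz v : VE)), m1⟩ := hPzcoe ⟨_, m1⟩
      rw [e1a, hPzm _ m2, add_zero]
      exact Subtype.ext rfl
    have e2 : Pm (φ.symm (φ (N ((Pz v : VE)) + M1 ((bB.symm x : Vm) : VE))))
        = cme (bB.symm x) := by
      rw [φ.symm_apply_apply, map_add]
      have e2a : Pm (M1 ((bB.symm x : Vm) : VE)) = ⟨M1 ((bB.symm x : Vm) : VE), m2⟩ :=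
        hPmcoe ⟨_, m2⟩
      rw [e2a, hPmz _ m1, zero_add]
      exact Subtype.ext rfl
    refine Prod.ext ?_ (Prod.ext ?_ ?_)
    · show ((cze.symm _ : Vz) : VE) + _ = v
      rw [e1, cze.symm_apply_apply, LinearEquiv.symm_apply_apply, add_comm, hdecomp]
    · exact Subsingleton.elim _ _
    · show bB (cme.symm _) = x
      rw [e2, cme.symm_apply_apply, LinearEquiv.apply_symm_apply]
  refine ⟨0, nB, 1, twist u ρBc, LinearEquiv.ofLinear fmap gmap hfg hgf, ?_⟩
  rintro g ⟨v, a, x⟩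
  rw [LinearEquiv.ofLinear_apply, LinearEquiv.ofLinear_apply]
  have hsrc : prodRep ρE (prodRep (twist u (1 : Representation ℂ G (Fin 0 → ℂ))) (twist u ρBc)) g (v, (a, x))
      = (ρE g v, ((u g : ℂ) • a, (u g : ℂ) • bB (ρm g (bB.symm x)))) := rfl
  have hdst : ∀ (w : VF) (a' : Fin 0 → ℂ) (y : Fin nB → ℂ),
      prodRep ρF (prodRep (1 : Representation ℂ G (Fin 0 → ℂ)) (twist u (twist u ρBc))) g (w, (a', y))
        = (ρF g w, (a', (u g : ℂ) • ((u g : ℂ) • bB (ρm g (bB.symm y))))) := fun w a' y => rfl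
  rw [hsrc, hfmap, hfmap v a x, hdst]
  have hx1 : (bB.symm ((u g : ℂ) • bB (ρm g (bB.symm x))) : Vm)
      = (u g : ℂ) • ρm g (bB.symm x) := by
    rw [map_smul, LinearEquiv.symm_apply_apply]
  have hx2 : ((bB.symm ((u g : ℂ) • bB (ρm g (bB.symm x))) : Vm) : VE)
      = (u g : ℂ) • ρE g ((bB.symm x : Vm) : VE) := by
    rw [hx1, Submodule.coe_smul, hρm]
  refine Prod.ext ?_ (Prod.ext ?_ ?_)
  · show φ _ = ρF g (φ _)
    rw [hx2, map_smul, hPzcomm]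
    by_cases hg : g ∈ H
    · rw [hu1 g hg, one_smul, hNHpt g hg, hM1Hpt g hg, ← map_add (ρE g), hφH g hg]
    · rw [hum g hg, neg_one_smul, hM1G g hg, neg_neg, hNG g hg,
        ← map_add (ρE g), hφG g hg]
      congr 1
      rw [← map_add Jil]
      have : Jil (N ((Pz v : VE)) + M1 ((bB.symm x : Vm) : VE))
          = Ji (N ((Pz v : VE)) + M1 ((bB.symm x : Vm) : VE)) := hJil _
      rw [this, hψJi]
  · exact Subsingleton.elim _ _
  · show bB (Pm (ρE g v)) = _
    have h1 : Pm (ρE g v) = ρm g (Pm v) := Subtype.ext (by rw [hPmcomm, hρm])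
    rw [h1, smul_smul, husq, one_smul, LinearEquiv.symm_apply_apply]
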